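/- Let S be a simple symmetric random walk on ℤ started at 0, T_1 := inf{n ≥ 1 : S_n = 0} its first return time to 0, and for N ∈ ℕ and β > 0 set λ_N(β) := −log E[exp(−β · min(T_1, N))]. Suppose C > 0 is a constant such that P(T_1 = 2k) ≥ C k^{−3/2} for all k ≥ 1. Then for every β > 0, liminf_{N→∞} √N · λ_N(β/N) ≥ C ∫_0^{1/2} t^{−3/2} (1 − e^{−2tβ}) dt, and this integral is finite and strictly positive. -/

import Mathlib

open MeasureTheory ProbabilityTheory Filter Topology

noncomputable section

open Classical in
/-- Real-valued indicator of a proposition. -/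
def indi (p : Prop) : ℝ := if p then 1 else 0

/-- The previous value `t (j-1)`, with the convention `t 0 = 0` (zero for the first index). -/
def prev {α : Type*} [Zero α] {n : ℕ} (t : Fin n → α) (j : Fin n) : α :=
  if _h : j.1 = 0 then 0 else t ⟨j.1 - 1, Nat.lt_of_le_of_lt (Nat.sub_le _ _) j.2⟩

/-- `S` is a simple symmetric random walk on `ℤ` under `P`: `S n = ξ 1 + ⋯ + ξ n` for an
i.i.d. family `ξ` of Rademacher (±1, probability 1/2 each) steps. -/
def IsSSRW {Ω : Type*} [MeasurableSpace Ω] (P : Measure Ω) (S : ℕ → Ω → ℤ) : Prop :=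
  ∃ ξ : ℕ → Ω → ℤ,
    iIndepFun ξ P ∧
    (∀ i, Measurable (ξ i)) ∧
    (∀ i, P {a | ξ i a = 1} = 1/2 ∧ P {a | ξ i a = -1} = 1/2) ∧
    (∀ n a, S n a = ∑ i ∈ Finset.Icc 1 n, ξ i a)

/-- `ω` is an i.i.d. field of Rademacher random variables indexed by `ℕ × ℤ` under `P`. -/
def IsRademacher {Ω : Type*} [MeasurableSpace Ω] (P : Measure Ω) (ω : ℕ × ℤ → Ω → ℝ) : Prop :=
  iIndepFun ω P ∧
  (∀ p, Measurable (ω p)) ∧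
  (∀ p, P {a | ω p a = 1} = 1/2 ∧ P {a | ω p a = -1} = 1/2)

/-- The partition function `𝔷_N(A) = E[∏_{n=1}^N (1 + A(n,S_n) ω(n,S_n)) | ω]`,
the conditional expectation being taken with respect to the σ-algebra generated by `ω`. -/
def partitionFn {Ω : Type*} [MeasurableSpace Ω] (P : Measure Ω)
    (S : ℕ → Ω → ℤ) (ω : ℕ × ℤ → Ω → ℝ) (N : ℕ) (A : ℕ × ℤ → ℝ) : Ω → ℝ :=
  P[fun a => ∏ n ∈ Finset.Icc 1 N, (1 + A (n, S n a) * ω (n, S n a) a) |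
    MeasurableSpace.comap (fun a => fun p => ω p a) inferInstance]

/-- The time coordinate `i` of `[t,x]_N`: the unique `i` with `t ∈ ((i-1)/N, i/N]`. -/
def gridTime (N : ℕ) (t : ℝ) : ℕ := ⌈(N : ℝ) * t⌉₊

/-- The space coordinate `z` of `[t,x]_N`: the unique `z` of the same parity as the time
coordinate `i` with `x ∈ ((z-1)/√N, (z+1)/√N]`. -/
def gridSpace (N : ℕ) (t x : ℝ) : ℤ :=
  (gridTime N t : ℤ) + 2 * ⌈(Real.sqrt N * x - 1 - ((gridTime N t : ℤ) : ℝ)) / 2⌉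

/-- The standard Gaussian heat kernel `ϱ(t,x) = e^{-x²/(2t)} / √(2πt)`. -/
def heatK (t x : ℝ) : ℝ := Real.exp (-(x ^ 2) / (2 * t)) / Real.sqrt (2 * Real.pi * t)

/-- `ϱ_n(t,x) = ∏_j ϱ(t_j - t_{j-1}, x_j - x_{j-1})` on the simplex `Δ_n × ℝ^n`,
zero outside. -/
def rhoN (n : ℕ) (q : (Fin n → ℝ) × (Fin n → ℝ)) : ℝ :=
  indi ((∀ j, 0 < q.1 j ∧ q.1 j ≤ 1) ∧ StrictMono q.1) *
    ∏ j, heatK (q.1 j - prev q.1 j) (q.2 j - prev q.2 j)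

/-- The average of `g` over the rectangle `((i-1)/N, i/N] × ((z-1)/√N, (z+1)/√N]`
(coordinatewise), whose Lebesgue measure is `2^n N^{-3n/2}`; this is the value
`ḡ_N(i/N, z/√N)`. -/
def rectAvg (n : ℕ) (g : (Fin n → ℝ) × (Fin n → ℝ) → ℝ) (N : ℕ)
    (i : Fin n → ℕ) (z : Fin n → ℤ) : ℝ :=
  ((N : ℝ) ^ ((3 * (n : ℝ)) / 2) / 2 ^ n) *
    ∫ q in (Set.univ.pi fun j => Set.Ioc (((i j : ℝ) - 1) / N) ((i j : ℝ) / N)) ×ˢ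
        (Set.univ.pi fun j =>
          Set.Ioc (((z j : ℝ) - 1) / Real.sqrt N) (((z j : ℝ) + 1) / Real.sqrt N)),
      g q

/-- The weighted U-statistic
`S^N_n(g) = 2^{n/2} ∑_{i ∈ E^N_n} ∑_{z ∈ ℤ^n, i ↔ z} ḡ_N(i/N, z/√N) A(i,z) ω(i,z)`. -/
def Ustat {Ω : Type*} (ω : ℕ × ℤ → Ω → ℝ) (A : ℕ × ℤ → ℝ) (n N : ℕ)
    (g : (Fin n → ℝ) × (Fin n → ℝ) → ℝ) (a : Ω) : ℝ :=
  2 ^ ((n : ℝ) / 2) *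
    ∑' i : Fin n → ℕ, ∑' z : Fin n → ℤ,
      indi ((∀ j, 1 ≤ i j ∧ i j ≤ N) ∧ Function.Injective i ∧
            ∀ j, (i j : ℤ) % 2 = z j % 2) *
        (rectAvg n g N i z * (∏ j, A (i j, z j)) * ∏ j, ω (i j, z j) a)

/-- Order-1 rectangle average: the value `ḡ_N(i/N, z/√N)`. -/
def rectAvg1 (g : ℝ × ℝ → ℝ) (N : ℕ) (i : ℕ) (z : ℤ) : ℝ :=
  ((N : ℝ) ^ ((3 : ℝ) / 2) / 2) *
    ∫ q in Set.Ioc (((i : ℝ) - 1) / N) ((i : ℝ) / N) ×ˢ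
        Set.Ioc (((z : ℝ) - 1) / Real.sqrt N) (((z : ℝ) + 1) / Real.sqrt N),
      g q

/-- The order-1 U-statistic `S^N_1(g) = √2 ∑_{i=1}^N ∑_{z ≡ i (2)} ḡ_N(i/N,z/√N) A(i,z) ω(i,z)`. -/
def Ustat1 {Ω : Type*} (ω : ℕ × ℤ → Ω → ℝ) (A : ℕ × ℤ → ℝ) (N : ℕ)
    (g : ℝ × ℝ → ℝ) (a : Ω) : ℝ :=
  Real.sqrt 2 * ∑ i ∈ Finset.Icc 1 N, ∑' z : ℤ,
    indi ((i : ℤ) % 2 = z % 2) * (rectAvg1 g N i z * A (i, z) * ω (i, z) a)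

/-- `p^N_n(t,x) = 2^{-n} p_n([t,x]_N) 1{⌈Nt⌉ ∈ D^N_n}`, built from the one-step
transition probabilities `p` of the walk. -/
def pNn (p : ℕ → ℤ → ℝ) (n N : ℕ) (q : (Fin n → ℝ) × (Fin n → ℝ)) : ℝ :=
  (2 : ℝ)⁻¹ ^ n *
    indi ((∀ j, 1 ≤ gridTime N (q.1 j) ∧ gridTime N (q.1 j) ≤ N) ∧
          StrictMono fun j => gridTime N (q.1 j)) *
    ∏ j, p (gridTime N (q.1 j) - prev (fun j' => gridTime N (q.1 j')) j)
        (gridSpace N (q.1 j) (q.2 j) - prev (fun j' => gridSpace N (q.1 j') (q.2 j')) j)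

end

section s16aux
open MeasureTheory Filter Set

lemma s16_aux1 {c s t : ℝ} (hc : 0 ≤ c) (hs : 0 < s) (hst : s ≤ t) :
    s * (1 - Real.exp (-(c*t))) ≤ t * (1 - Real.exp (-(c*s))) := by
  have ht : 0 < t := hs.trans_le hst
  have hθ : 0 ≤ s/t := by positivity
  have hθ1 : s/t ≤ 1 := by rw [div_le_one ht]; exact hst
  have hconv := convexOn_exp.2 (Set.mem_univ (0:ℝ)) (Set.mem_univ (-(c*t)))
    (by linarith : (0:ℝ) ≤ 1 - s/t) hθ (by ring)
  simp only [smul_eq_mul, mul_zero, Real.exp_zero] at hconv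
  have harg : 0 + s/t * -(c*t) = -(c*s) := by field_simp; ring
  rw [harg] at hconv
  have h1 := mul_le_mul_of_nonneg_left hconv ht.le
  have expand : t * ((1 - s/t) * 1 + s/t * Real.exp (-(c*t)))
      = t - s + s * Real.exp (-(c*t)) := by field_simp
  rw [expand] at h1
  linarith

lemma s16f_nonneg {β t : ℝ} (hβ : 0 ≤ β) (ht : 0 < t) :
    0 ≤ t ^ (-(3/2:ℝ)) * (1 - Real.exp (-2*t*β)) := by
  have h1 : Real.exp (-2*t*β) ≤ 1 := by
    rw [Real.exp_le_one_iff]; nlinarith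
  have : (0:ℝ) ≤ t ^ (-(3/2:ℝ)) := Real.rpow_nonneg ht.le _
  nlinarith

lemma s16f_anti {β s t : ℝ} (hβ : 0 ≤ β) (hs : 0 < s) (hst : s ≤ t) :
    t ^ (-(3/2:ℝ)) * (1 - Real.exp (-2*t*β)) ≤ s ^ (-(3/2:ℝ)) * (1 - Real.exp (-2*s*β)) := by
  have ht : 0 < t := hs.trans_le hst
  have key := s16_aux1 (c := 2*β) (by linarith) hs hst
  have hes : -(2*β*s) = -2*s*β := by ring
  have het : -(2*β*t) = -2*t*β := by ring
  rw [hes, het] at key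
  have hsplit : ∀ u : ℝ, 0 < u → u ^ (-(3/2:ℝ)) = u ^ (-(1/2:ℝ)) * u⁻¹ := by
    intro u hu
    rw [← Real.rpow_neg_one u, ← Real.rpow_add hu]
    norm_num
  rw [hsplit s hs, hsplit t ht]
  have h2 : t ^ (-(1/2:ℝ)) ≤ s ^ (-(1/2:ℝ)) := by
    rw [Real.rpow_neg hs.le, Real.rpow_neg ht.le]
    exact inv_anti₀ (by positivity) (Real.rpow_le_rpow hs.le hst (by norm_num))
  have h3 : (1 - Real.exp (-2*t*β)) * t⁻¹ ≤ (1 - Real.exp (-2*s*β)) * s⁻¹ := by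
    rw [← div_eq_mul_inv, ← div_eq_mul_inv, div_le_div_iff₀ ht hs]
    nlinarith [key]
  have h4 : 0 ≤ (1 - Real.exp (-2*t*β)) * t⁻¹ := by
    have he : Real.exp (-2*t*β) ≤ 1 := by rw [Real.exp_le_one_iff]; nlinarith
    exact mul_nonneg (by linarith) (by positivity)
  calc t ^ (-(1/2:ℝ)) * t⁻¹ * (1 - Real.exp (-2*t*β))
      = t ^ (-(1/2:ℝ)) * ((1 - Real.exp (-2*t*β)) * t⁻¹) := by ring
    _ ≤ s ^ (-(1/2:ℝ)) * ((1 - Real.exp (-2*s*β)) * s⁻¹) :=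
        mul_le_mul h2 h3 h4 (Real.rpow_nonneg hs.le _)
    _ = s ^ (-(1/2:ℝ)) * s⁻¹ * (1 - Real.exp (-2*s*β)) := by ring

lemma s16f_le {β t : ℝ} (hβ : 0 ≤ β) (ht : 0 < t) :
    t ^ (-(3/2:ℝ)) * (1 - Real.exp (-2*t*β)) ≤ 2*β * t ^ (-(1/2:ℝ)) := by
  have h1 : 1 - Real.exp (-2*t*β) ≤ 2*t*β := by
    nlinarith [Real.add_one_le_exp (-2*t*β)]
  have hh : t ^ (-(1/2:ℝ)) = t ^ (-(3/2:ℝ)) * t := by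
    rw [show (-(1/2:ℝ)) = -(3/2) + 1 by norm_num, Real.rpow_add_one ht.ne']
  calc t ^ (-(3/2:ℝ)) * (1 - Real.exp (-2*t*β)) ≤ t ^ (-(3/2:ℝ)) * (2*t*β) :=
        mul_le_mul_of_nonneg_left h1 (Real.rpow_nonneg ht.le _)
    _ = 2*β * t ^ (-(1/2:ℝ)) := by rw [hh]; ring

lemma s16f_meas (β : ℝ) : Measurable (fun t : ℝ => t ^ (-(3/2:ℝ)) * (1 - Real.exp (-2*t*β))) := by
  fun_prop

lemma s16g_int (R : ℝ) : IntegrableOn (fun t : ℝ => t ^ (-(1/2:ℝ))) (Ioc 0 R) volume := by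
  rcases le_or_gt R 0 with h | h
  · rw [Set.Ioc_eq_empty (not_lt.mpr h)]; exact integrableOn_empty
  · have := (intervalIntegral.intervalIntegrable_rpow' (a := 0) (b := R) (r := -(1/2:ℝ)) (by norm_num))
    rw [intervalIntegrable_iff_integrableOn_Ioc_of_le h.le] at this
    exact this

lemma s16f_int {β : ℝ} (hβ : 0 ≤ β) (R : ℝ) :
    IntegrableOn (fun t : ℝ => t ^ (-(3/2:ℝ)) * (1 - Real.exp (-2*t*β))) (Ioc 0 R) volume := by
  apply Integrable.mono' ((s16g_int R).const_mul (2*β)) ((s16f_meas β).aestronglyMeasurable.restrict)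
  rw [ae_restrict_iff' measurableSet_Ioc]
  filter_upwards with t ht
  rw [Real.norm_eq_abs, abs_of_nonneg (s16f_nonneg hβ ht.1)]
  exact s16f_le hβ ht.1

lemma s16f_tail {β : ℝ} (hβ : 0 ≤ β) {x : ℝ} (hx : 0 ≤ x) :
    ∫ t in Ioc (0:ℝ) x, t ^ (-(3/2:ℝ)) * (1 - Real.exp (-2*t*β)) ≤ 4*β*Real.sqrt x := by
  have h1 : ∫ t in Ioc (0:ℝ) x, t ^ (-(3/2:ℝ)) * (1 - Real.exp (-2*t*β))
      ≤ ∫ t in Ioc (0:ℝ) x, 2*β * t ^ (-(1/2:ℝ)) := by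
    apply setIntegral_mono_on (s16f_int hβ x) ((s16g_int x).const_mul (2*β)) measurableSet_Ioc
    intro t ht; exact s16f_le hβ ht.1
  have h2 : ∫ t in Ioc (0:ℝ) x, (t ^ (-(1/2:ℝ))) = 2 * Real.sqrt x := by
    rw [← intervalIntegral.integral_of_le hx, integral_rpow (Or.inl (by norm_num))]
    rw [Real.zero_rpow (by norm_num), Real.sqrt_eq_rpow]
    rw [div_eq_mul_inv]
    norm_num [mul_comm]
  rw [integral_const_mul, h2] at h1
  linarith

lemma s16_riemann {β : ℝ} (hβ : 0 < β) {N : ℕ} (hN : 2 ≤ N) :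
    (∫ t in Ioc (0:ℝ) (1/2), t ^ (-(3/2:ℝ)) * (1 - Real.exp (-2*t*β))) - 4*β/Real.sqrt N
      ≤ ∑ k ∈ Finset.Icc 1 (N/2), (1/(N:ℝ)) *
          (((k:ℝ)/N) ^ (-(3/2:ℝ)) * (1 - Real.exp (-2*((k:ℝ)/N)*β))) := by
  set f : ℝ → ℝ := fun t => t ^ (-(3/2:ℝ)) * (1 - Real.exp (-2*t*β)) with hf
  have hNR : (0:ℝ) < N := by positivity
  set M := N / 2 with hM
  set a : ℕ → ℝ := fun i => ((i:ℝ)+1)/N with ha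
  have hii : ∀ u v : ℝ, 0 ≤ u → 0 ≤ v → IntervalIntegrable f volume u v := by
    intro u v hu hv
    rcases le_total u v with h | h
    · rw [intervalIntegrable_iff_integrableOn_Ioc_of_le h]
      exact (s16f_int hβ.le v).mono_set (Set.Ioc_subset_Ioc_left hu)
    · exact ((intervalIntegrable_iff_integrableOn_Ioc_of_le h).2
        ((s16f_int hβ.le u).mono_set (Set.Ioc_subset_Ioc_left hv))).symm
  have hlea : ∀ i : ℕ, a i ≤ a (i+1) := by
    intro i
    rw [ha]
    rw [div_le_div_iff₀ hNR hNR]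
    push_cast
    nlinarith
  have hstep : ∀ i : ℕ, (∫ t in (a i)..(a (i+1)), f t) ≤ (1/(N:ℝ)) * f (a i) := by
    intro i
    have hai : (0:ℝ) < a i := by rw [ha]; positivity
    rw [intervalIntegral.integral_of_le (hlea i)]
    have h1 : (∫ t in Ioc (a i) (a (i+1)), f t) ≤ ∫ _ in Ioc (a i) (a (i+1)), f (a i) := by
      apply setIntegral_mono_on
      · exact ((intervalIntegrable_iff_integrableOn_Ioc_of_le (hlea i)).1
          (hii _ _ hai.le (hai.le.trans (hlea i))))
      · exact integrableOn_const measure_Ioc_lt_top.ne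
      · exact measurableSet_Ioc
      · intro t ht
        exact s16f_anti hβ.le hai ht.1.le
    have h2 : (∫ _ in Ioc (a i) (a (i+1)), f (a i)) = (1/(N:ℝ)) * f (a i) := by
      rw [setIntegral_const, measureReal_def, Real.volume_Ioc, smul_eq_mul]
      congr 1
      rw [ENNReal.toReal_ofReal (by linarith [hlea i])]
      rw [ha]
      push_cast
      field_simp
      ring
    linarith
  -- telescoping
  have htel : ∑ i ∈ Finset.range M, (∫ t in (a i)..(a (i+1)), f t)
      = ∫ t in (a 0)..(a M), f t := by
    apply intervalIntegral.sum_integral_adjacent_intervals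
    intro i _
    apply hii
    · rw [ha]; positivity
    · rw [ha]; positivity
  -- the sum over Icc equals sum over range of shifted terms and dominates the integral
  have hsum_eq : ∑ k ∈ Finset.Icc 1 M, (1/(N:ℝ)) * f ((k:ℝ)/N)
      = ∑ i ∈ Finset.range M, (1/(N:ℝ)) * f (a i) := by
    rw [show Finset.Icc 1 M = Finset.Ico 1 (M+1) by rfl, Finset.sum_Ico_eq_sum_range]
    simp only [Nat.add_sub_cancel]
    apply Finset.sum_congr rfl
    intro i _
    rw [ha]
    push_cast
    ring_nf
  have hsum_ge : ∫ t in (a 0)..(a M), f t ≤ ∑ k ∈ Finset.Icc 1 M, (1/(N:ℝ)) * f ((k:ℝ)/N) := by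
    rw [hsum_eq, ← htel]
    exact Finset.sum_le_sum fun i _ => hstep i
  -- now compare ∫_{a 0}^{a M} with ∫_{Ioc 0 1/2}
  have hM2 : (1:ℝ)/2 ≤ a M := by
    rw [ha, le_div_iff₀ hNR]
    have : (N:ℝ) ≤ 2 * ((M:ℝ) + 1) := by
      have h2M : N < 2 * (M + 1) := by
        rw [hM]
        omega
      exact_mod_cast h2M.le
    linarith
  have ha0 : a 0 = 1/(N:ℝ) := by rw [ha]; norm_num
  have ha0le : (1:ℝ)/N ≤ 1/2 := by
    rw [div_le_div_iff₀ hNR (by norm_num)]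
    have : (2:ℝ) ≤ N := by exact_mod_cast hN
    linarith
  have hsplit1 : (∫ t in (a 0)..(1/2:ℝ), f t) + (∫ t in (1/2:ℝ)..(a M), f t)
      = ∫ t in (a 0)..(a M), f t := by
    apply intervalIntegral.integral_add_adjacent_intervals
    · exact hii _ _ (by rw [ha0]; positivity) (by norm_num)
    · exact hii _ _ (by norm_num) (by rw [ha]; positivity)
  have hpos2 : 0 ≤ ∫ t in (1/2:ℝ)..(a M), f t := by
    apply intervalIntegral.integral_nonneg hM2
    intro u hu
    exact s16f_nonneg hβ.le (lt_of_lt_of_le (by norm_num) hu.1)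
  have hsplit2 : (∫ t in (0:ℝ)..(a 0), f t) + (∫ t in (a 0)..(1/2:ℝ), f t)
      = ∫ t in (0:ℝ)..(1/2:ℝ), f t := by
    apply intervalIntegral.integral_add_adjacent_intervals
    · exact hii _ _ le_rfl (by rw [ha0]; positivity)
    · exact hii _ _ (by rw [ha0]; positivity) (by norm_num)
  have htail : (∫ t in (0:ℝ)..(a 0), f t) ≤ 4*β/Real.sqrt N := by
    rw [intervalIntegral.integral_of_le (by rw [ha0]; positivity)]
    have := s16f_tail hβ.le (x := a 0) (by rw [ha0]; positivity)
    rw [ha0] at this ⊢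
    calc (∫ t in Ioc (0:ℝ) (1/(N:ℝ)), f t) ≤ 4*β*Real.sqrt (1/(N:ℝ)) := this
      _ = 4*β/Real.sqrt N := by
          rw [one_div, Real.sqrt_inv, div_eq_mul_inv]
  have hIoc : (∫ t in (0:ℝ)..(1/2:ℝ), f t) = ∫ t in Ioc (0:ℝ) (1/2), f t :=
    intervalIntegral.integral_of_le (by norm_num)
  calc (∫ t in Ioc (0:ℝ) (1/2), f t) - 4*β/Real.sqrt N
      ≤ (∫ t in (0:ℝ)..(1/2:ℝ), f t) - (∫ t in (0:ℝ)..(a 0), f t) := by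
        rw [hIoc]; linarith
    _ = ∫ t in (a 0)..(1/2:ℝ), f t := by linarith
    _ ≤ ∫ t in (a 0)..(a M), f t := by linarith
    _ ≤ ∑ k ∈ Finset.Icc 1 M, (1/(N:ℝ)) * f ((k:ℝ)/N) := hsum_ge


lemma s16_prob {Ω : Type*} [MeasurableSpace Ω] (P : Measure Ω) [IsProbabilityMeasure P]
    (T : Ω → ℕ) (hTmeas : Measurable T) (c : ℝ) (hc : 0 ≤ c) (N : ℕ) :
    ∑ k ∈ Finset.Icc 1 (N/2), (P {a | T a = 2*k}).toReal * (1 - Real.exp (-c * ((2*k:ℕ):ℝ)))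
      ≤ 1 - ∫ a, Real.exp (-c * ((min (T a) N : ℕ):ℝ)) ∂P := by
  set g : Ω → ℝ := fun a => Real.exp (-c * ((min (T a) N : ℕ):ℝ)) with hg
  have hgmeas : Measurable g := by
    apply Real.measurable_exp.comp
    exact (measurable_from_top.comp (hTmeas.min measurable_const)).const_mul (-c)
  have hgbd : ∀ a, g a ≤ 1 := by
    intro a
    rw [hg, Real.exp_le_one_iff]
    have : (0:ℝ) ≤ ((min (T a) N : ℕ):ℝ) := Nat.cast_nonneg _
    nlinarith
  have hgnn : ∀ a, 0 ≤ g a := fun a => Real.exp_nonneg _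
  have hgint : Integrable g P := by
    apply Integrable.mono' (integrable_const (1:ℝ)) hgmeas.aestronglyMeasurable
    filter_upwards with a
    rw [Real.norm_eq_abs, abs_of_nonneg (hgnn a)]
    exact hgbd a
  have hms : ∀ k : ℕ, MeasurableSet {a | T a = 2*k} := by
    intro k
    exact hTmeas (measurableSet_singleton (2*k))
  set h : Ω → ℝ := fun a => ∑ k ∈ Finset.Icc 1 (N/2),
    Set.indicator {a' | T a' = 2*k} (fun _ => 1 - Real.exp (-c * ((2*k:ℕ):ℝ))) a with hh
  have hpt : ∀ a, h a ≤ 1 - g a := by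
    intro a
    by_cases hex : ∃ k ∈ Finset.Icc 1 (N/2), T a = 2*k
    · obtain ⟨k, hk, hTa⟩ := hex
      have hksum : h a = 1 - Real.exp (-c * ((2*k:ℕ):ℝ)) := by
        rw [hh]
        dsimp only
        have hz : ∀ j ∈ Finset.Icc 1 (N/2), j ≠ k →
            Set.indicator {a' | T a' = 2*j}
              (fun _ => 1 - Real.exp (-c * ((2*j:ℕ):ℝ))) a = 0 := by
          intro j _ hne
          apply Set.indicator_of_notMem (s := {a' | T a' = 2*j})
          simp only [mem_setOf_eq, hTa]
          omega
        have heq := Finset.sum_eq_single_of_mem (s := Finset.Icc 1 (N/2))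
          (f := fun j => Set.indicator {a' | T a' = 2*j}
            (fun _ => 1 - Real.exp (-c * ((2*j:ℕ):ℝ))) a) k hk hz
        exact heq.trans (Set.indicator_of_mem (show a ∈ {a' | T a' = 2*k} from hTa) _)
      have hmin : min (T a) N = 2*k := by
        rw [hTa]
        apply min_eq_left
        simp only [Finset.mem_Icc] at hk
        omega
      rw [hksum, hg]
      simp only [hmin]
      exact le_refl _
    · push_neg at hex
      have : h a = 0 := by
        rw [hh]
        dsimp only
        apply Finset.sum_eq_zero
        intro k hk
        exact Set.indicator_of_notMem (s := {a' | T a' = 2*k}) (fun hmem => hex k hk hmem) _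
      rw [this]
      linarith [hgbd a]
  have hhint : Integrable h P := by
    apply integrable_finset_sum
    intro k _
    rw [integrable_indicator_iff (hms k)]
    exact integrableOn_const (measure_ne_top P _)
  have hinth : ∫ a, h a ∂P = ∑ k ∈ Finset.Icc 1 (N/2),
      (P {a | T a = 2*k}).toReal * (1 - Real.exp (-c * ((2*k:ℕ):ℝ))) := by
    rw [hh, integral_finset_sum]
    · apply Finset.sum_congr rfl
      intro k _
      rw [integral_indicator_const _ (hms k), smul_eq_mul, measureReal_def]
    · intro k _
      rw [integrable_indicator_iff (hms k)]
      exact integrableOn_const (measure_ne_top P _)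
  have hsub : ∫ a, (1 - g a) ∂P = 1 - ∫ a, g a ∂P := by
    rw [integral_sub (integrable_const 1) hgint, integral_const]
    simp
  calc ∑ k ∈ Finset.Icc 1 (N/2),
      (P {a | T a = 2*k}).toReal * (1 - Real.exp (-c * ((2*k:ℕ):ℝ)))
      = ∫ a, h a ∂P := hinth.symm
    _ ≤ ∫ a, (1 - g a) ∂P := integral_mono hhint ((integrable_const 1).sub hgint) hpt
    _ = 1 - ∫ a, g a ∂P := hsub


lemma s16_Tmeas {Ω : Type*} [MeasurableSpace Ω] (S : ℕ → Ω → ℤ) (hSmeas : ∀ n, Measurable (S n))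
    (T : Ω → ℕ) (hT : ∀ a, T a = sInf {n : ℕ | 1 ≤ n ∧ S n a = 0}) : Measurable T := by
  have hbase : ∀ m : ℕ, MeasurableSet {a : Ω | 1 ≤ m ∧ S m a = 0} := by
    intro m
    rcases Nat.eq_zero_or_pos m with hm | hm
    · have : {a : Ω | 1 ≤ m ∧ S m a = 0} = ∅ := by
        ext a; simp [hm]
      rw [this]; exact MeasurableSet.empty
    · have : {a : Ω | 1 ≤ m ∧ S m a = 0} = S m ⁻¹' {0} := by
        ext a
        simp only [mem_setOf_eq, mem_preimage, mem_singleton_iff]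
        exact ⟨fun h => h.2, fun h => ⟨hm, h⟩⟩
      rw [this]; exact hSmeas m (measurableSet_singleton 0)
  apply measurable_to_countable'
  intro n
  rcases Nat.eq_zero_or_pos n with hn | hn
  · subst hn
    have heq : T ⁻¹' {0} = ⋂ m, {a : Ω | 1 ≤ m ∧ S m a = 0}ᶜ := by
      ext a
      simp only [mem_preimage, mem_singleton_iff, mem_iInter, mem_compl_iff, mem_setOf_eq, hT a]
      constructor
      · intro h0 m hm
        rcases Nat.sInf_eq_zero.1 h0 with h | h
        · exact absurd h.1 (by norm_num)
        · have : m ∈ {n : ℕ | 1 ≤ n ∧ S n a = 0} := hm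
          rw [h] at this
          exact this
      · intro hall
        rw [Nat.sInf_eq_zero]
        right
        ext m
        simp only [mem_setOf_eq, mem_empty_iff_false, iff_false]
        exact hall m
    rw [heq]
    exact MeasurableSet.iInter fun m => (hbase m).compl
  · have heq : T ⁻¹' {n} = {a : Ω | 1 ≤ n ∧ S n a = 0} ∩
        ⋂ m, ⋂ _ : m < n, {a : Ω | 1 ≤ m ∧ S m a = 0}ᶜ := by
      ext a
      simp only [mem_preimage, mem_singleton_iff, mem_inter_iff, mem_iInter, mem_compl_iff,
        mem_setOf_eq, hT a]
      constructor
      · intro h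
        have hne : {m : ℕ | 1 ≤ m ∧ S m a = 0}.Nonempty := by
          by_contra hemp
          rw [Set.not_nonempty_iff_eq_empty] at hemp
          rw [hemp, Nat.sInf_empty] at h
          omega
        constructor
        · have := Nat.sInf_mem hne
          rw [h] at this
          exact this
        · intro m hm
          exact Nat.notMem_of_lt_sInf (h ▸ hm)
      · rintro ⟨hmem, hlt⟩
        apply le_antisymm (Nat.sInf_le hmem)
        by_contra h'
        push_neg at h'
        exact hlt _ h' (Nat.sInf_mem (⟨n, hmem⟩ : {m : ℕ | 1 ≤ m ∧ S m a = 0}.Nonempty))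
    rw [heq]
    exact (hbase n).inter (MeasurableSet.iInter fun m => MeasurableSet.iInter fun _ => (hbase m).compl)


lemma s16_term {β : ℝ} {N k : ℕ} (hN : 0 < N) (hk : 1 ≤ k) (C : ℝ) :
    Real.sqrt N * (C * (k:ℝ) ^ (-(3/2:ℝ)) * (1 - Real.exp (-(β/(N:ℝ)) * ((2*k:ℕ):ℝ))))
      = C * ((1/(N:ℝ)) * (((k:ℝ)/N) ^ (-(3/2:ℝ)) * (1 - Real.exp (-2*((k:ℝ)/N)*β)))) := by
  have hNR : (0:ℝ) < N := by exact_mod_cast hN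
  have hkR : (0:ℝ) < k := by exact_mod_cast hk
  have hexp : -(β/(N:ℝ)) * ((2*k:ℕ):ℝ) = -2*((k:ℝ)/N)*β := by
    push_cast
    ring
  rw [hexp]
  have hrpow : ((k:ℝ)/N) ^ (-(3/2:ℝ)) = (k:ℝ)^(-(3/2:ℝ)) * (N:ℝ)^((3:ℝ)/2) := by
    rw [Real.div_rpow hkR.le hNR.le, Real.rpow_neg hNR.le]
    field_simp
  have hNsplit : ((N:ℝ))^((3:ℝ)/2) = N * Real.sqrt N := by
    rw [show ((3:ℝ)/2) = 1 + 1/2 by norm_num, Real.rpow_add hNR, Real.rpow_one,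
      Real.sqrt_eq_rpow]
  rw [hrpow, hNsplit]
  field_simp

end s16aux

/-- With `T₁` the first return time to `0` of a simple symmetric random
walk and `λ_N(β) = -log E[exp(-β min(T₁, N))]`, if `C > 0` satisfies
`P(T₁ = 2k) ≥ C k^{-3/2}` for all `k ≥ 1`, then for every `β > 0` the integral
`∫_0^{1/2} t^{-3/2} (1 - e^{-2tβ}) dt` is finite and strictly positive and
`liminf_N √N λ_N(β/N) ≥ C ∫_0^{1/2} t^{-3/2} (1 - e^{-2tβ}) dt` (expressed below in
the ε-form of the liminf inequality). -/
theorem statement16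
    {Ω : Type*} [MeasurableSpace Ω] (P : Measure Ω) [IsProbabilityMeasure P]
    (S : ℕ → Ω → ℤ) (hS : IsSSRW P S)
    (T : Ω → ℕ) (hT : ∀ a, T a = sInf {n : ℕ | 1 ≤ n ∧ S n a = 0})
    (lam : ℕ → ℝ → ℝ)
    (hlam : ∀ N β, lam N β = - Real.log (∫ a, Real.exp (-β * ((min (T a) N : ℕ) : ℝ)) ∂P))
    (C : ℝ) (hC : 0 < C)
    (hlow : ∀ k : ℕ, 1 ≤ k →
      ENNReal.ofReal (C * (k : ℝ) ^ (-(3/2 : ℝ))) ≤ P {a | T a = 2 * k})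
    (β : ℝ) (hβ : 0 < β) :
    IntegrableOn (fun t : ℝ => t ^ (-(3/2 : ℝ)) * (1 - Real.exp (-2 * t * β)))
        (Set.Ioc 0 (1/2)) volume
    ∧ 0 < ∫ t in Set.Ioc (0 : ℝ) (1/2), t ^ (-(3/2 : ℝ)) * (1 - Real.exp (-2 * t * β))
    ∧ ∀ ε : ℝ, 0 < ε → ∀ᶠ N : ℕ in atTop,
        C * (∫ t in Set.Ioc (0 : ℝ) (1/2), t ^ (-(3/2 : ℝ)) * (1 - Real.exp (-2 * t * β))) - ε
          ≤ Real.sqrt N * lam N (β / N) := by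
  obtain ⟨ξ, hindep, hξmeas, hpm, hsum⟩ := hS
  have hSmeas : ∀ n, Measurable (S n) := by
    intro n
    have : S n = fun a => ∑ i ∈ Finset.Icc 1 n, ξ i a := funext fun a => hsum n a
    rw [this]
    exact Finset.measurable_sum _ fun i _ => hξmeas i
  have hTmeas : Measurable T := s16_Tmeas S hSmeas T hT
  refine ⟨s16f_int hβ.le (1/2), ?_, ?_⟩
  · -- positivity of the integral
    have hae : (0 : ℝ → ℝ) ≤ᵐ[volume.restrict (Set.Ioc (0:ℝ) (1/2))]
        fun t : ℝ => t ^ (-(3/2:ℝ)) * (1 - Real.exp (-2*t*β)) := by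
      refine (ae_restrict_iff' measurableSet_Ioc).2 ?_
      filter_upwards with t ht
      exact s16f_nonneg hβ.le ht.1
    rw [setIntegral_pos_iff_support_of_nonneg_ae hae (s16f_int hβ.le (1/2))]
    have hsub : Set.Ioc (0:ℝ) (1/2) ⊆
        (Function.support fun t : ℝ => t ^ (-(3/2:ℝ)) * (1 - Real.exp (-2*t*β)))
          ∩ Set.Ioc (0:ℝ) (1/2) := by
      intro t ht
      refine ⟨?_, ht⟩
      have h1 : (0:ℝ) < t ^ (-(3/2:ℝ)) := Real.rpow_pos_of_pos ht.1 _
      have h2 : Real.exp (-2*t*β) < 1 := by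
        rw [Real.exp_lt_one_iff]
        nlinarith [ht.1]
      exact ne_of_gt (by nlinarith)
    calc (0:ENNReal) < ENNReal.ofReal (1/2 - 0) := by norm_num
      _ = volume (Set.Ioc (0:ℝ) (1/2)) := (Real.volume_Ioc).symm
      _ ≤ _ := measure_mono hsub
  · -- the liminf inequality
    intro ε hε
    have hev2 : ∀ᶠ N : ℕ in atTop, C * (4*β) / Real.sqrt N < ε := by
      have htend : Tendsto (fun N : ℕ => C * (4*β) / Real.sqrt N) atTop (nhds 0) := by
        apply Tendsto.div_atTop tendsto_const_nhds
        have hcast : (fun N : ℕ => Real.sqrt (N:ℝ))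
            = (fun x : ℝ => x ^ (1/2:ℝ)) ∘ (fun N : ℕ => (N:ℝ)) :=
          funext fun N => Real.sqrt_eq_rpow _
        rw [hcast]
        exact (tendsto_rpow_atTop (by norm_num)).comp tendsto_natCast_atTop_atTop
      exact htend.eventually (gt_mem_nhds hε)
    filter_upwards [eventually_ge_atTop 2, hev2] with N hN2 hNε
    have hN0 : 0 < N := by omega
    have hNR : (0:ℝ) < N := by exact_mod_cast hN0
    -- integrability and positivity of E
    set E := ∫ a, Real.exp (-(β/(N:ℝ)) * ((min (T a) N : ℕ):ℝ)) ∂P with hE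
    have hc : (0:ℝ) ≤ β / N := by positivity
    have hgmeas : Measurable fun a => Real.exp (-(β/(N:ℝ)) * ((min (T a) N : ℕ):ℝ)) := by
      apply Real.measurable_exp.comp
      exact (measurable_from_top.comp (hTmeas.min measurable_const)).const_mul _
    have hgint : Integrable (fun a => Real.exp (-(β/(N:ℝ)) * ((min (T a) N : ℕ):ℝ))) P := by
      apply Integrable.mono' (integrable_const (1:ℝ)) hgmeas.aestronglyMeasurable
      filter_upwards with a
      rw [Real.norm_eq_abs, abs_of_nonneg (Real.exp_nonneg _)]
      rw [Real.exp_le_one_iff]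
      have : (0:ℝ) ≤ ((min (T a) N : ℕ):ℝ) := Nat.cast_nonneg _
      nlinarith
    have hEpos : 0 < E := by
      have hp : ∀ a : Ω, Real.exp (-β) ≤ Real.exp (-(β/(N:ℝ)) * ((min (T a) N : ℕ):ℝ)) := by
        intro a
        apply Real.exp_le_exp.2
        have h1 : ((min (T a) N : ℕ):ℝ) ≤ N := by
          exact_mod_cast min_le_right (T a) N
        have h2 : (0:ℝ) ≤ ((min (T a) N : ℕ):ℝ) := Nat.cast_nonneg _
        rw [neg_mul, neg_le_neg_iff]
        rw [div_mul_eq_mul_div, div_le_iff₀ hNR]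
        nlinarith
      calc (0:ℝ) < Real.exp (-β) := Real.exp_pos _
        _ = ∫ _, Real.exp (-β) ∂P := by simp
        _ ≤ E := integral_mono (integrable_const _) hgint hp
    have h1 : 1 - E ≤ lam N (β/N) := by
      rw [hlam N (β/N)]
      have := Real.log_le_sub_one_of_pos hEpos
      rw [hE]
      linarith
    have h2 := s16_prob P T hTmeas (β/N) hc N
    rw [← hE] at h2
    have hsq : (0:ℝ) ≤ Real.sqrt N := Real.sqrt_nonneg _
    set I := ∫ t in Set.Ioc (0:ℝ) (1/2), t ^ (-(3/2:ℝ)) * (1 - Real.exp (-2*t*β)) with hI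
    have hA : C * (I - 4*β/Real.sqrt N) ≤ Real.sqrt N * lam N (β/N) := by
      calc C * (I - 4*β/Real.sqrt N)
          ≤ C * ∑ k ∈ Finset.Icc 1 (N/2), (1/(N:ℝ)) *
              (((k:ℝ)/N) ^ (-(3/2:ℝ)) * (1 - Real.exp (-2*((k:ℝ)/N)*β))) :=
            mul_le_mul_of_nonneg_left (s16_riemann hβ hN2) hC.le
        _ = ∑ k ∈ Finset.Icc 1 (N/2), Real.sqrt N *
              (C * (k:ℝ) ^ (-(3/2:ℝ)) * (1 - Real.exp (-(β/(N:ℝ)) * ((2*k:ℕ):ℝ)))) := by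
            rw [Finset.mul_sum]
            apply Finset.sum_congr rfl
            intro k hk
            exact (s16_term hN0 (Finset.mem_Icc.1 hk).1 C).symm
        _ ≤ ∑ k ∈ Finset.Icc 1 (N/2), Real.sqrt N *
              ((P {a | T a = 2*k}).toReal * (1 - Real.exp (-(β/(N:ℝ)) * ((2*k:ℕ):ℝ)))) := by
            apply Finset.sum_le_sum
            intro k hk
            apply mul_le_mul_of_nonneg_left ?_ hsq
            have hek : (0:ℝ) ≤ 1 - Real.exp (-(β/(N:ℝ)) * ((2*k:ℕ):ℝ)) := by
              have h2k : (0:ℝ) ≤ ((2*k:ℕ):ℝ) := Nat.cast_nonneg _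
              have := Real.exp_le_one_iff.2 (by nlinarith : -(β/(N:ℝ)) * ((2*k:ℕ):ℝ) ≤ 0)
              linarith
            apply mul_le_mul_of_nonneg_right ?_ hek
            have hlk := hlow k (Finset.mem_Icc.1 hk).1
            rw [ENNReal.ofReal_le_iff_le_toReal (measure_ne_top P _)] at hlk
            exact hlk
        _ = Real.sqrt N * ∑ k ∈ Finset.Icc 1 (N/2),
              (P {a | T a = 2*k}).toReal * (1 - Real.exp (-(β/(N:ℝ)) * ((2*k:ℕ):ℝ))) :=
            (Finset.mul_sum _ _ _).symm
        _ ≤ Real.sqrt N * (1 - E) := mul_le_mul_of_nonneg_left h2 hsq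
        _ ≤ Real.sqrt N * lam N (β/N) := mul_le_mul_of_nonneg_left h1 hsq
    have hexpand : C * (I - 4*β/Real.sqrt N) = C*I - C*(4*β)/Real.sqrt N := by ring
    rw [hexpand] at hA
    linarith
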